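/- Let P = (Σ, s₀, g) be a probabilistic planning problem with Σ = (S, A, γ, Pr), and let P̂ = (Σ̂, s₀, g) be the classical planning problem whose domain Σ̂ is the all-outcomes determinization of Σ. Let φ₁ and φ₂ be conditions. If there is a natural ordering φ₁ → φ₂ in P̂ (for all i, in every solution plan of P̂ in which φ₂ is true at time i, φ₁ is true at some time j < i), then there is a natural ordering φ₁ → φ₂ in P (for all i, for every policy π and every history σ ∈ H(s₀, π, g) in which φ₂ is true at time i, φ₁ is true at some time j < i). -/
import Mathlib


/-- A probabilistic planning domain: `γ` gives the set of possible successor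
states, `pr` the transition probabilities (a distribution over `γ s a`
whenever `a` is applicable in `s`, i.e. `γ s a ≠ ∅`). -/
structure ProbDomain (S A : Type*) where
  γ : S → A → Finset S
  pr : S → A → S → ℝ
  pr_nonneg : ∀ s a s', s' ∈ γ s a → 0 ≤ pr s a s'
  pr_sum : ∀ s a, (γ s a).Nonempty → ∑ s' ∈ γ s a, pr s a s' = 1

/-- A policy: a partial function from states to actions, mapping each state in
its domain to an action applicable there. -/
structure Policy {S A : Type*} (D : ProbDomain S A) where
  act : S → Option A
  applicable : ∀ s a, act s = some a → (D.γ s a).Nonempty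

/-- `σ` is a history of policy `pol` from `s0` (w.r.t. goal `g`):
a nonempty finite sequence starting at `s0`, following transitions allowed by
`γ` and `pol`, and such that a position is final iff the state there satisfies
`g` or is outside the domain of the policy. -/
def IsHistory {S A : Type*} (D : ProbDomain S A) (pol : Policy D)
    (s0 : S) (g : S → Prop) (σ : List S) : Prop :=
  1 ≤ σ.length ∧ σ.getD 0 s0 = s0 ∧
  (∀ i, i + 1 < σ.length →
    ∃ a, pol.act (σ.getD i s0) = some a ∧
      σ.getD (i + 1) s0 ∈ D.γ (σ.getD i s0) a) ∧
  (∀ i, i < σ.length →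
    ((g (σ.getD i s0) ∨ pol.act (σ.getD i s0) = none) ↔ i = σ.length - 1))

/-- Membership in `H(s0, pol, g)`: a history of `pol` from `s0` whose final
state satisfies `g`. -/
def InGoalHistories {S A : Type*} (D : ProbDomain S A) (pol : Policy D)
    (s0 : S) (g : S → Prop) (σ : List S) : Prop :=
  IsHistory D pol s0 g σ ∧ g (σ.getD (σ.length - 1) s0)

/-- A classical (deterministic) planning domain: `δ` is a partial
deterministic transition function. -/
structure ClassDomain (S B : Type*) where
  δ : S → B → Option S

/-- `execPlan Dh s plan` is the state obtained by applying the actions of the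
plan in order starting from `s`, when every action in turn is applicable. -/
def execPlan {S B : Type*} (Dh : ClassDomain S B) : S → List B → Option S
  | s, [] => some s
  | s, b :: rest => (Dh.δ s b).bind fun s' => execPlan Dh s' rest

/-- A plan solves the classical problem `(Dh, s0, g)` if executing it from
`s0` is defined and reaches a state satisfying `g`. -/
def SolvesClass {S B : Type*} (Dh : ClassDomain S B) (s0 : S) (g : S → Prop)
    (plan : List B) : Prop :=
  ∃ s, execPlan Dh s0 plan = some s ∧ g s

/-- The condition `φ` is true at time `i` in the plan `plan` from `s0`. -/
def TrueAt {S B : Type*} (Dh : ClassDomain S B) (s0 : S) (φ : S → Prop)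
    (plan : List B) (i : ℕ) : Prop :=
  ∃ s, execPlan Dh s0 (plan.take i) = some s ∧ φ s

/-- `φ` is a landmark for the classical problem `(Dh, s0, g)`: it is true at
some time in every solution plan. -/
def ClassLandmark {S B : Type*} (Dh : ClassDomain S B) (s0 : S)
    (g φ : S → Prop) : Prop :=
  ∀ plan : List B, SolvesClass Dh s0 g plan →
    ∃ i ≤ plan.length, TrueAt Dh s0 φ plan i

/-- `Dh` is an all-outcomes determinization of `D`: every possible outcome of
every applicable probabilistic action is realized by some deterministic
action, and conversely every deterministic transition comes from an outcome of
some probabilistic action. -/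
def IsAllOutcomes {S A B : Type*} (D : ProbDomain S A)
    (Dh : ClassDomain S B) : Prop :=
  (∀ s a s', s' ∈ D.γ s a → ∃ b, Dh.δ s b = some s') ∧
  (∀ s b s', Dh.δ s b = some s' → ∃ a, s' ∈ D.γ s a)

/-- Natural ordering `φ1 → φ2` in the classical problem: for all `i`, in
every solution plan in which `φ2` is true at time `i`, `φ1` is true at some
time `j < i`. -/
def ClassNaturalOrder {S B : Type*} (Dh : ClassDomain S B) (s0 : S)
    (g φ1 φ2 : S → Prop) : Prop :=
  ∀ plan : List B, SolvesClass Dh s0 g plan →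
    ∀ i ≤ plan.length, TrueAt Dh s0 φ2 plan i →
      ∃ j < i, TrueAt Dh s0 φ1 plan j

/-- Natural ordering `φ1 → φ2` in the probabilistic problem: for all `i`,
for every policy and every history in `H(s0, π, g)` in which `φ2` is true at
time `i`, `φ1` is true at some time `j < i`. -/
def ProbNaturalOrder {S A : Type*} (D : ProbDomain S A) (s0 : S)
    (g φ1 φ2 : S → Prop) : Prop :=
  ∀ (pol : Policy D) (σ : List S), InGoalHistories D pol s0 g σ →
    ∀ i < σ.length, φ2 (σ.getD i s0) → ∃ j < i, φ1 (σ.getD j s0)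

lemma buildPlan {S B : Type*} (Dh : ClassDomain S B) :
    ∀ (σ : List S) (s d : S), σ.getD 0 d = s →
    (∀ i, i + 1 < σ.length →
      ∃ b, Dh.δ (σ.getD i d) b = some (σ.getD (i + 1) d)) →
    1 ≤ σ.length →
    ∃ plan : List B, plan.length = σ.length - 1 ∧
      ∀ i ≤ plan.length, execPlan Dh s (plan.take i) = some (σ.getD i d) := by
  intro σ
  induction σ with
  | nil => intro s d _ _ h; simp at h
  | cons s1 rest ih =>
    intro s d h0 htrans _
    simp only [List.getD_cons_zero] at h0
    subst h0
    cases rest with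
    | nil =>
      refine ⟨[], by simp, ?_⟩
      intro i hi
      have h : i = 0 := by simpa using hi
      subst h
      simp [execPlan]
    | cons s2 rest' =>
      obtain ⟨plan', hlen', hexec'⟩ :=
        ih s2 d (by simp) (fun i hi => by
          have := htrans (i + 1) (by simpa using hi)
          simpa using this) (by simp)
      obtain ⟨b, hb⟩ := htrans 0 (by simp)
      simp only [List.getD_cons_zero, List.getD_cons_succ] at hb
      refine ⟨b :: plan', by simp [hlen'], ?_⟩
      intro i hi
      cases i with
      | zero => simp [execPlan]
      | succ i =>
        simp only [List.take_succ_cons, execPlan, hb, Option.bind_some,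
          List.getD_cons_succ]
        exact hexec' i (by simpa using hi)

/-- A natural ordering in the all-outcomes determinization
carries over to the probabilistic problem. -/
theorem natural_order_of_determinization {S A B : Type*}
    [Fintype S] [Fintype A] [Fintype B]
    (D : ProbDomain S A) (Dh : ClassDomain S B) (hdet : IsAllOutcomes D Dh)
    (s0 : S) (g φ1 φ2 : S → Prop)
    (hord : ClassNaturalOrder Dh s0 g φ1 φ2) :
    ProbNaturalOrder D s0 g φ1 φ2 := by
  intro pol σ ⟨⟨hlen, h0, htrans, _⟩, hg⟩ i hi hφ2
  obtain ⟨plan, hplen, hexec⟩ := buildPlan Dh σ s0 s0 h0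
    (fun k hk => by
      obtain ⟨a, _, ha⟩ := htrans k hk
      exact hdet.1 _ a _ ha) hlen
  have hsolve : SolvesClass Dh s0 g plan := by
    refine ⟨σ.getD (σ.length - 1) s0, ?_, hg⟩
    have := hexec plan.length le_rfl
    rwa [List.take_length, hplen] at this
  have hile : i ≤ plan.length := by omega
  obtain ⟨j, hj, s, hs, hφ1⟩ := hord plan hsolve i hile
    ⟨σ.getD i s0, hexec i hile, hφ2⟩
  refine ⟨j, hj, ?_⟩
  have := hexec j (le_of_lt (lt_of_lt_of_le hj hile))
  rw [this] at hs
  injection hs with h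
  rwa [h]
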